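/- Let s ≥ 1, t ≥ 2, z ≥ 1 and λ be natural numbers with z ≤ λ ≤ z + s − 1, and set θ = t·s + λ. Define P_CA = {j + s·i : 0 ≤ j ≤ s−1, 0 ≤ i ≤ t−1}, P_CB = {(s−1−k) + θ·l : 0 ≤ k ≤ s−1, 0 ≤ l ≤ t−1}, P_SA = {t·s + u : 0 ≤ u ≤ z−1}, and P_SB = {t·s + θ·(t−1) + r : 0 ≤ r ≤ z−1}. Then the sumset (P_CA ∪ P_SA) + (P_CB ∪ P_SB) has cardinality 2·t·s + (t·s+λ)·(t−1) + 2z − 1. -/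
import Mathlib


open Pointwise

/-- AGE-CMPC worker count for z ≤ λ ≤ z + s − 1 (θ = t·s + λ),
Case 1 of the Appendix H lemma:
|(P_CA ∪ P_SA) + (P_CB ∪ P_SB)| = 2ts + (ts+λ)(t−1) + 2z − 1. -/
theorem age_workers_lambda_ge_z_case1 (s t z lam : ℕ) (hs : 1 ≤ s) (ht : 2 ≤ t)
    (hz : 1 ≤ z) (hlam1 : z ≤ lam) (hlam2 : lam ≤ z + s - 1) :
    (({n : ℕ | ∃ j i, j < s ∧ i < t ∧ n = j + s * i} ∪
      {n : ℕ | ∃ u, u < z ∧ n = t * s + u}) +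
     ({n : ℕ | ∃ k l, k < s ∧ l < t ∧ n = (s - 1 - k) + (t * s + lam) * l} ∪
      {n : ℕ | ∃ r, r < z ∧ n = t * s + (t * s + lam) * (t - 1) + r})).ncard
      = 2 * (t * s) + (t * s + lam) * (t - 1) + 2 * z - 1 := by
  have h2ts : 2 ≤ t * s := by nlinarith
  have memA : ∀ a : ℕ, a < t * s + z →
      a ∈ ({n : ℕ | ∃ j i, j < s ∧ i < t ∧ n = j + s * i} ∪
           {n : ℕ | ∃ u, u < z ∧ n = t * s + u}) := by
    intro a ha
    by_cases h' : a < t * s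
    · exact Set.mem_union_left _
        ⟨a % s, a / s, Nat.mod_lt _ (by omega),
          (Nat.div_lt_iff_lt_mul (by omega)).mpr h', (Nat.mod_add_div a s).symm⟩
    · exact Set.mem_union_right _ ⟨a - t * s, by omega, by omega⟩
  have key : (({n : ℕ | ∃ j i, j < s ∧ i < t ∧ n = j + s * i} ∪
      {n : ℕ | ∃ u, u < z ∧ n = t * s + u}) +
     ({n : ℕ | ∃ k l, k < s ∧ l < t ∧ n = (s - 1 - k) + (t * s + lam) * l} ∪
      {n : ℕ | ∃ r, r < z ∧ n = t * s + (t * s + lam) * (t - 1) + r}))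
      = Set.Iio (2 * (t * s) + (t * s + lam) * (t - 1) + 2 * z - 1) := by
    apply Set.Subset.antisymm
    · intro n hn
      rw [Set.mem_add] at hn
      obtain ⟨a, ha, b, hb, rfl⟩ := hn
      have hA : a < t * s + z := by
        rcases ha with ⟨j, i, hj, hi, rfl⟩ | ⟨u, hu, rfl⟩
        · have : s * i + s ≤ t * s := by nlinarith
          omega
        · omega
      have hB : b < t * s + (t * s + lam) * (t - 1) + z := by
        rcases hb with ⟨k, l, hk, hl, rfl⟩ | ⟨r, hr, rfl⟩
        · have h1 : (t * s + lam) * l ≤ (t * s + lam) * (t - 1) :=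
            Nat.mul_le_mul_left _ (by omega)
          have h2 : s ≤ t * s := by nlinarith
          omega
        · omega
      simp only [Set.mem_Iio]
      omega
    · intro n hn
      simp only [Set.mem_Iio] at hn
      by_cases hc : n < t * s + (t * s + lam) * (t - 1)
      · -- use a coded-B term
        have hθ : 0 < t * s + lam := by omega
        have hmulθ : (t * s + lam) * (t - 1) + (t * s + lam) = (t * s + lam) * t := by
          have h1 : t - 1 + 1 = t := by omega
          calc (t * s + lam) * (t - 1) + (t * s + lam)
              = (t * s + lam) * ((t - 1) + 1) := by ring
            _ = (t * s + lam) * t := by rw [h1]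
        have hl : n / (t * s + lam) < t := by
          rw [Nat.div_lt_iff_lt_mul hθ]
          calc n < t * s + (t * s + lam) * (t - 1) := hc
            _ ≤ (t * s + lam) * (t - 1) + (t * s + lam) := by omega
            _ = (t * s + lam) * t := hmulθ
            _ = t * (t * s + lam) := by ring
        have hd : n % (t * s + lam) < t * s + lam := Nat.mod_lt _ hθ
        have hnd : (t * s + lam) * (n / (t * s + lam)) + n % (t * s + lam) = n :=
          Nat.div_add_mod n _
        set d := n % (t * s + lam) with hdd
        set l := n / (t * s + lam) with hll
        by_cases hds : d < s
        · rw [show n = 0 + ((s - 1 - (s - 1 - d)) + (t * s + lam) * l) by omega]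
          exact Set.add_mem_add
            (Set.mem_union_left _ ⟨0, 0, by omega, by omega, by ring⟩)
            (Set.mem_union_left _ ⟨s - 1 - d, l, by omega, hl, rfl⟩)
        · rw [show n = (d - (s - 1)) + ((s - 1 - 0) + (t * s + lam) * l) by omega]
          exact Set.add_mem_add
            (memA _ (by omega))
            (Set.mem_union_left _ ⟨0, l, by omega, hl, rfl⟩)
      · -- use a secret-B term
        set D := n - (t * s + (t * s + lam) * (t - 1)) with hD
        set r := min D (z - 1) with hr
        rw [show n = (D - r) + (t * s + (t * s + lam) * (t - 1) + r) by omega]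
        exact Set.add_mem_add
          (memA _ (by omega))
          (Set.mem_union_right _ ⟨r, by omega, rfl⟩)
  rw [key, ← Finset.coe_Iio, Set.ncard_coe_finset, Nat.card_Iio]
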